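/- (Estimation.) Let Φ be an m×d real matrix with restricted isometry constants satisfying δ_{3s} ≤ δ_{4s} ≤ 0.1. Let T ⊆ {1,…,d} be a set of at most 3s indices, let x ∈ ℝ^d be s-sparse, let e ∈ ℝ^m, and set u = Φx + e. Define the least-squares signal estimate b ∈ ℝ^d by b|_T = (Φ_T* Φ_T)⁻¹ Φ_T* u (the matrix Φ_T* Φ_T being invertible since δ_{3s} < 1) and b|_{T^c} = 0. Then ‖x − b‖₂ ≤ 1.112 ‖x|_{T^c}‖₂ + 1.06 ‖e‖₂. -/

import Mathlib

open Matrix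


/-- The Euclidean (ℓ2) norm of a finitely-indexed real vector. -/
noncomputable def l2 {ι : Type*} [Fintype ι] (v : ι → ℝ) : ℝ :=
  Real.sqrt (∑ i, (v i) ^ 2)

/-- A vector is `s`-sparse if it has at most `s` nonzero coordinates. -/
def Sparse {d : ℕ} (s : ℕ) (v : Fin d → ℝ) : Prop :=
  {i | v i ≠ 0}.ncard ≤ s

lemma l2_nonneg {ι : Type*} [Fintype ι] (v : ι → ℝ) : 0 ≤ l2 v := Real.sqrt_nonneg _

lemma l2_sq {ι : Type*} [Fintype ι] (v : ι → ℝ) : l2 v ^ 2 = ∑ i, (v i) ^ 2 :=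
  Real.sq_sqrt (Finset.sum_nonneg fun _ _ => sq_nonneg _)

lemma l2_eq_zero {ι : Type*} [Fintype ι] {v : ι → ℝ} (h : l2 v = 0) : v = 0 := by
  have h2 : ∑ i, (v i) ^ 2 = 0 := by rw [← l2_sq, h]; ring
  funext i
  have := (Finset.sum_eq_zero_iff_of_nonneg (fun i _ => sq_nonneg (v i))).1 h2 i (Finset.mem_univ i)
  exact pow_eq_zero_iff (by norm_num) |>.1 this

lemma dot_le_l2 {ι : Type*} [Fintype ι] (f g : ι → ℝ) : f ⬝ᵥ g ≤ l2 f * l2 g := by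
  have h := Finset.sum_mul_sq_le_sq_mul_sq Finset.univ f g
  have h2 : f ⬝ᵥ g ≤ Real.sqrt ((∑ i, f i ^ 2) * (∑ i, g i ^ 2)) := by
    calc f ⬝ᵥ g ≤ |∑ i, f i * g i| := le_abs_self _
    _ = Real.sqrt ((∑ i, f i * g i) ^ 2) := (Real.sqrt_sq_eq_abs _).symm
    _ ≤ _ := Real.sqrt_le_sqrt h
  rwa [Real.sqrt_mul (Finset.sum_nonneg fun _ _ => sq_nonneg _)] at h2

lemma dot_self_eq {ι : Type*} [Fintype ι] (f : ι → ℝ) : f ⬝ᵥ f = l2 f ^ 2 := by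
  rw [l2_sq]; simp [dotProduct, sq]

lemma sparse_of_subset {d : ℕ} {r : ℕ} {v w : Fin d → ℝ}
    (h : {i | v i ≠ 0} ⊆ {i | w i ≠ 0}) (hw : Sparse r w) : Sparse r v :=
  le_trans (Set.ncard_le_ncard h (Set.toFinite _)) hw

/-- `δ` satisfies the restricted isometry inequalities of `Φ` at sparsity level `r`
(quadratic form); `δ_r ≤ δ` is equivalent to this (for `δ ≥ 0`). -/
def RICq {m d : ℕ} (Φ : Matrix (Fin m) (Fin d) ℝ) (r : ℕ) (δ : ℝ) : Prop :=
  ∀ v : Fin d → ℝ, Sparse r v →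
    (1 - δ) * (l2 v) ^ 2 ≤ (l2 (Φ.mulVec v)) ^ 2 ∧
      (l2 (Φ.mulVec v)) ^ 2 ≤ (1 + δ) * (l2 v) ^ 2

lemma RO0 {m d r : ℕ} {δ : ℝ} (Φ : Matrix (Fin m) (Fin d) ℝ) (hΦ : RICq Φ r δ)
    (u v : Fin d → ℝ) (h1 : Sparse r (u + v)) (h2 : Sparse r (u - v))
    (hd : ∀ i, u i * v i = 0) :
    (Φ.mulVec u) ⬝ᵥ (Φ.mulVec v) ≤ δ * ((l2 u) ^ 2 + (l2 v) ^ 2) / 2 := by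
  obtain ⟨_, hup⟩ := hΦ (u + v) h1
  obtain ⟨hlo, _⟩ := hΦ (u - v) h2
  have e1 : l2 (u + v) ^ 2 = l2 u ^ 2 + l2 v ^ 2 := by
    simp only [l2_sq]
    rw [← Finset.sum_add_distrib]
    refine Finset.sum_congr rfl fun i _ => ?_
    have := hd i
    simp only [Pi.add_apply]
    nlinarith [hd i]
  have e2 : l2 (u - v) ^ 2 = l2 u ^ 2 + l2 v ^ 2 := by
    simp only [l2_sq]
    rw [← Finset.sum_add_distrib]
    refine Finset.sum_congr rfl fun i _ => ?_
    simp only [Pi.sub_apply]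
    nlinarith [hd i]
  have e3 : l2 (Φ.mulVec (u + v)) ^ 2 - l2 (Φ.mulVec (u - v)) ^ 2
      = 4 * ((Φ.mulVec u) ⬝ᵥ (Φ.mulVec v)) := by
    simp only [l2_sq, Matrix.mulVec_add, Matrix.mulVec_sub, dotProduct]
    rw [← Finset.sum_sub_distrib, Finset.mul_sum]
    refine Finset.sum_congr rfl fun i _ => ?_
    simp only [Pi.add_apply, Pi.sub_apply]
    ring
  rw [e1] at hup
  rw [e2] at hlo
  linarith

lemma RO {m d r : ℕ} {δ : ℝ} (hδ : 0 ≤ δ) (Φ : Matrix (Fin m) (Fin d) ℝ) (hΦ : RICq Φ r δ)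
    (u v : Fin d → ℝ) (h1 : Sparse r (u + v)) (h2 : Sparse r (u - v))
    (hd : ∀ i, u i * v i = 0) :
    (Φ.mulVec u) ⬝ᵥ (Φ.mulVec v) ≤ δ * l2 u * l2 v := by
  by_cases hu : l2 u = 0
  · simp [l2_eq_zero hu, hu, l2]
  by_cases hv : l2 v = 0
  · simp [l2_eq_zero hv, hv, l2]
  have hu0 : 0 < l2 u := lt_of_le_of_ne (l2_nonneg u) (Ne.symm hu)
  have hv0 : 0 < l2 v := lt_of_le_of_ne (l2_nonneg v) (Ne.symm hv)
  set α := l2 u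
  set β := l2 v
  set c : ℝ := Real.sqrt (β / α) with hc
  have hc0 : 0 < c := Real.sqrt_pos.2 (div_pos hv0 hu0)
  have hc2 : c ^ 2 = β / α := Real.sq_sqrt (le_of_lt (div_pos hv0 hu0))
  set u' : Fin d → ℝ := c • u with hu'
  set v' : Fin d → ℝ := c⁻¹ • v with hv'
  have hd' : ∀ i, u' i * v' i = 0 := by
    intro i
    have : u' i * v' i = (c * c⁻¹) * (u i * v i) := by
      simp [hu', hv']; ring
    rw [this, hd i, mul_zero]
  have hsupp : ∀ i, u i + v i = 0 → u i = 0 ∧ v i = 0 := by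
    intro i hi
    have h0 := hd i
    have hv0' : v i = 0 := by nlinarith
    exact ⟨by linarith, hv0'⟩
  have hsupp2 : ∀ i, u i - v i = 0 → u i = 0 ∧ v i = 0 := by
    intro i hi
    have h0 := hd i
    have hv0' : v i = 0 := by nlinarith
    exact ⟨by linarith, hv0'⟩
  have h1' : Sparse r (u' + v') := by
    refine sparse_of_subset (fun i hi => ?_) h1
    simp only [Set.mem_setOf_eq, Pi.add_apply] at hi ⊢
    intro hz
    obtain ⟨hz1, hz2⟩ := hsupp i hz
    apply hi
    simp [hu', hv', hz1, hz2]
  have h2' : Sparse r (u' - v') := by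
    refine sparse_of_subset (fun i hi => ?_) h2
    simp only [Set.mem_setOf_eq, Pi.sub_apply] at hi ⊢
    intro hz
    obtain ⟨hz1, hz2⟩ := hsupp2 i hz
    apply hi
    simp [hu', hv', hz1, hz2]
  have key := RO0 Φ hΦ u' v' h1' h2' hd'
  have hdot : (Φ.mulVec u') ⬝ᵥ (Φ.mulVec v') = (Φ.mulVec u) ⬝ᵥ (Φ.mulVec v) := by
    rw [hu', hv', Matrix.mulVec_smul, Matrix.mulVec_smul, smul_dotProduct, dotProduct_smul,
      smul_eq_mul, smul_eq_mul, ← mul_assoc, mul_inv_cancel₀ (ne_of_gt hc0), one_mul]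
  have hl2u' : l2 u' ^ 2 = c ^ 2 * α ^ 2 := by
    simp only [l2_sq, hu', Pi.smul_apply, smul_eq_mul, mul_pow, ← Finset.mul_sum]
    rw [← l2_sq]
  have hl2v' : l2 v' ^ 2 = (c ^ 2)⁻¹ * β ^ 2 := by
    simp only [l2_sq, hv', Pi.smul_apply, smul_eq_mul, mul_pow, ← Finset.mul_sum]
    rw [← l2_sq, inv_pow]
  have hsum : l2 u' ^ 2 + l2 v' ^ 2 = 2 * (α * β) := by
    rw [hl2u', hl2v', hc2]
    field_simp
    ring
  rw [hdot, hsum] at key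
  linarith [key]

lemma arith_bound {a t ε N : ℝ} (ha : 0 ≤ a) (ht : 0 ≤ t) (hε : 0 ≤ ε) (hN : 0 ≤ N)
    (hlow : (9 / 10 : ℝ) * t ^ 2 ≤ N ^ 2)
    (hNt : N ^ 2 ≤ (1 / 10) * a * t + ε * N) :
    t ≤ 0.112 * a + 1.06 * ε := by
  have hμ : (0.9486 : ℝ) * t ≤ N := by nlinarith [mul_nonneg ht hN, sq_nonneg (N - 0.9486 * t)]
  rcases eq_or_lt_of_le hN with hN1 | hN1
  · have ht1 : t = 0 := by nlinarith
    rw [ht1]; positivity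
  · have h2 : (0.9486 : ℝ) * N ^ 2 ≤ (1 / 10) * a * N + 0.9486 * ε * N := by
      nlinarith [mul_le_mul_of_nonneg_left hμ (by linarith : (0 : ℝ) ≤ (1 / 10) * a)]
    have h3 : (0.9486 : ℝ) * N ≤ (1 / 10) * a + 0.9486 * ε := by nlinarith
    nlinarith

lemma sq_split_le {X a t : ℝ} (hX : 0 ≤ X) (ha : 0 ≤ a) (ht : 0 ≤ t)
    (h : X ^ 2 = a ^ 2 + t ^ 2) : X ≤ a + t := by
  nlinarith


/-- The column submatrix of `Φ` with columns indexed by `T`. -/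
def colSub {m d : ℕ} (Φ : Matrix (Fin m) (Fin d) ℝ) (T : Finset (Fin d)) :
    Matrix (Fin m) {j // j ∈ T} ℝ :=
  Matrix.of fun i j => Φ i j.1

lemma sum_ext_eq {d : ℕ} (T : Finset (Fin d)) (f : Fin d → ℝ) (g : {j // j ∈ T} → ℝ)
    (hf : ∀ j ∉ T, f j = 0) (hfg : ∀ j : {j // j ∈ T}, f j.1 = g j) :
    ∑ j, f j = ∑ j : {j // j ∈ T}, g j := by
  rw [← Finset.sum_subset (Finset.subset_univ T) (fun j _ hj => hf j hj)]
  rw [← Finset.sum_attach T f, Finset.univ_eq_attach]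
  exact Finset.sum_congr rfl fun j _ => hfg j

/-- **Estimation.** Suppose `δ_{4s} ≤ 0.1` (hence `δ_{3s} ≤ δ_{4s} ≤ 0.1`).
Let `|T| ≤ 3s`, `x` be `s`-sparse, `u = Φx + e`, and let `b` be the least-squares
estimate: `b|_T = (Φ_T* Φ_T)⁻¹ Φ_T* u` and `b|_{T^c} = 0`. Then
`‖x − b‖₂ ≤ 1.112 ‖x|_{T^c}‖₂ + 1.06 ‖e‖₂`. -/
theorem stmt11 (m d s : ℕ) (hs : 0 < s)
    (Φ : Matrix (Fin m) (Fin d) ℝ) (hΦ : RICq Φ (4 * s) (1 / 10))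
    (T : Finset (Fin d)) (hT : T.card ≤ 3 * s)
    (x : Fin d → ℝ) (hx : Sparse s x) (e : Fin m → ℝ)
    (b : Fin d → ℝ)
    (hb : b = fun j => if h : j ∈ T then
        (((colSub Φ T).transpose * colSub Φ T)⁻¹.mulVec
          ((colSub Φ T).transpose.mulVec (Φ.mulVec x + e))) ⟨j, h⟩
      else 0) :
    l2 (x - b) ≤ 1.112 * l2 (fun i => if i ∈ T then 0 else x i) + 1.06 * l2 e := by
  classical
  set A := colSub Φ T with hA
  set G := A.transpose * A with hG
  set ext : ({j // j ∈ T} → ℝ) → (Fin d → ℝ) :=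
    fun w j => if h : j ∈ T then w ⟨j, h⟩ else 0 with hext
  -- extension commutes with Φ
  have extmul : ∀ w, Φ.mulVec (ext w) = A.mulVec w := by
    intro w
    funext i
    show ∑ j, Φ i j * ext w j = ∑ j : {j // j ∈ T}, A i j * w j
    refine sum_ext_eq T _ _ (fun j hj => ?_) (fun j => ?_)
    · simp [hext, dif_neg hj]
    · simp [hext, dif_pos j.2, hA, colSub]
  have l2ext : ∀ w, l2 (ext w) = l2 w := by
    intro w
    unfold l2
    congr 1
    refine sum_ext_eq T _ _ (fun j hj => ?_) (fun j => ?_)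
    · simp [hext, dif_neg hj]
    · simp [hext, dif_pos j.2]
  -- sparsity of extensions
  have hspA : ∀ w : {j // j ∈ T} → ℝ, Sparse (4 * s) (ext w) := by
    intro w
    have hsub : {i | ext w i ≠ 0} ⊆ ↑T := by
      intro i hi
      simp only [Set.mem_setOf_eq, hext] at hi
      by_contra hiT
      rw [Finset.mem_coe] at hiT
      exact hi (dif_neg hiT)
    calc {i | ext w i ≠ 0}.ncard ≤ (↑T : Set (Fin d)).ncard :=
          Set.ncard_le_ncard hsub T.finite_toSet
      _ = T.card := Set.ncard_coe_finset T
      _ ≤ 4 * s := by omega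
  -- Gram identity
  have gram : ∀ w z, (A.mulVec w) ⬝ᵥ (A.mulVec z) = (G.mulVec w) ⬝ᵥ z := by
    intro w z
    rw [hG, ← Matrix.mulVec_mulVec, Matrix.mulVec_transpose,
      ← Matrix.dotProduct_mulVec]
  -- RIC lower bound on T
  have hlow : ∀ w : {j // j ∈ T} → ℝ,
      (9 / 10 : ℝ) * l2 w ^ 2 ≤ l2 (A.mulVec w) ^ 2 := by
    intro w
    have := (hΦ (ext w) (hspA w)).1
    rw [extmul w, l2ext w] at this
    linarith
  -- positive definiteness and invertibility of G
  have hGpd : G.PosDef := by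
    rw [Matrix.posDef_iff_dotProduct_mulVec]
    constructor
    · have := Matrix.isHermitian_conjTranspose_mul_self A
      simpa [Matrix.conjTranspose_eq_transpose_of_trivial, hG] using this
    · intro w hw
      have hsw : star w = w := by simp
      rw [hsw, dotProduct_comm, ← gram w w, dot_self_eq]
      have hw2 : l2 w ≠ 0 := fun h => hw (l2_eq_zero h)
      have hw3 : 0 < l2 w ^ 2 :=
        lt_of_le_of_ne (sq_nonneg _) (Ne.symm (pow_ne_zero 2 hw2))
      have := hlow w
      nlinarith
  have hdet : IsUnit G.det := hGpd.det_pos.ne'.isUnit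
  have hGG : G * G⁻¹ = 1 := Matrix.mul_nonsing_inv G hdet
  -- definitions
  set xc : Fin d → ℝ := fun i => if i ∈ T then 0 else x i with hxc
  set xT' : {j // j ∈ T} → ℝ := fun j => x j.1 with hxT'
  set u : Fin m → ℝ := Φ.mulVec x + e with hu
  set y : {j // j ∈ T} → ℝ := G⁻¹.mulVec (A.transpose.mulVec u) with hy
  set w : Fin m → ℝ := Φ.mulVec xc + e with hw
  set h : {j // j ∈ T} → ℝ := y - xT' with hh
  have hbext : b = ext y := by rw [hb]
  -- x = ext xT' + xc
  have hxdec : x = ext xT' + xc := by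
    funext i
    by_cases hi : i ∈ T <;> simp [hext, hxc, hi, hxT']
  -- key equation : G h = Aᵀ w
  have hGy : G.mulVec y = A.transpose.mulVec u := by
    rw [hy, Matrix.mulVec_mulVec, hGG, Matrix.one_mulVec]
  have hΦx : Φ.mulVec x = A.mulVec xT' + Φ.mulVec xc := by
    conv_lhs => rw [hxdec]
    rw [Matrix.mulVec_add, extmul]
  have hkey : G.mulVec h = A.transpose.mulVec w := by
    rw [hh, Matrix.mulVec_sub, hGy, hu, hΦx]
    have : A.mulVec xT' + Φ.mulVec xc + e = A.mulVec xT' + w := by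
      rw [hw]; abel
    rw [this, Matrix.mulVec_add, Matrix.mulVec_mulVec, ← hG]
    abel
  -- quantities
  set a : ℝ := l2 xc with ha
  set t : ℝ := l2 h with ht
  set ε : ℝ := l2 e with hε
  set N : ℝ := l2 (A.mulVec h) with hN
  have ha0 : 0 ≤ a := l2_nonneg _
  have ht0 : 0 ≤ t := l2_nonneg _
  have hε0 : 0 ≤ ε := l2_nonneg _
  have hN0 : 0 ≤ N := l2_nonneg _
  -- N² = w ⬝ᵥ (A h)
  have hNsq : N ^ 2 = w ⬝ᵥ (A.mulVec h) := by
    rw [hN, ← dot_self_eq, gram h h, hkey, Matrix.mulVec_transpose,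
      ← Matrix.dotProduct_mulVec, dotProduct_comm]
  -- split
  have hsplit : w ⬝ᵥ (A.mulVec h) = (Φ.mulVec xc) ⬝ᵥ (Φ.mulVec (ext h)) + e ⬝ᵥ (A.mulVec h) := by
    rw [hw, add_dotProduct, extmul]
  -- sparsity for RO
  have hxcsp : Sparse s xc := by
    refine sparse_of_subset (fun i hi => ?_) hx
    simp only [Set.mem_setOf_eq, hxc] at hi ⊢
    by_cases hiT : i ∈ T
    · simp [hiT] at hi
    · simpa [hiT] using hi
  have hsparse_pm : ∀ (σ : ℝ), Sparse (4 * s) (xc + σ • ext h) := by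
    intro σ
    have hsub : {i | (xc + σ • ext h) i ≠ 0} ⊆ {i | xc i ≠ 0} ∪ ↑T := by
      intro i hi
      simp only [Set.mem_setOf_eq, Pi.add_apply] at hi
      by_cases hiT : i ∈ T
      · exact Or.inr hiT
      · left
        simp only [Set.mem_setOf_eq]
        intro hz
        apply hi
        simp [hz, hext, dif_neg hiT]
    calc {i | (xc + σ • ext h) i ≠ 0}.ncard
        ≤ ({i | xc i ≠ 0} ∪ ↑T).ncard := Set.ncard_le_ncard hsub (Set.toFinite _)
      _ ≤ {i | xc i ≠ 0}.ncard + (↑T : Set (Fin d)).ncard := Set.ncard_union_le _ _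
      _ ≤ s + 3 * s := by
          have h1 : {i | xc i ≠ 0}.ncard ≤ s := hxcsp
          rw [Set.ncard_coe_finset]
          omega
      _ = 4 * s := by ring
  have hsp1 : Sparse (4 * s) (xc + ext h) := by
    have := hsparse_pm 1
    simpa using this
  have hsp2 : Sparse (4 * s) (xc - ext h) := by
    have := hsparse_pm (-1)
    have he : xc + (-1 : ℝ) • ext h = xc - ext h := by
      funext i; simp; ring
    rwa [he] at this
  have hdisj : ∀ i, xc i * ext h i = 0 := by
    intro i
    by_cases hiT : i ∈ T
    · simp [hxc, hiT]
    · simp [hext, dif_neg hiT]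
  -- RO bound
  have hRO : (Φ.mulVec xc) ⬝ᵥ (Φ.mulVec (ext h)) ≤ (1 / 10) * a * t := by
    have := RO (by norm_num) Φ hΦ xc (ext h) hsp1 hsp2 hdisj
    rwa [l2ext, ← ha, ← ht] at this
  -- Cauchy-Schwarz bound
  have hCS : e ⬝ᵥ (A.mulVec h) ≤ ε * N := dot_le_l2 e (A.mulVec h)
  -- lower RIC bound
  have hlow' : (9 / 10 : ℝ) * t ^ 2 ≤ N ^ 2 := by
    have := hlow h
    rwa [← ht, ← hN] at this
  -- combine : t ≤ 0.112 a + 1.06 ε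
  have hNt : N ^ 2 ≤ (1 / 10) * a * t + ε * N := by
    rw [hNsq, hsplit]; linarith
  have htb : t ≤ 0.112 * a + 1.06 * ε := arith_bound ha0 ht0 hε0 hN0 hlow' hNt
  -- final : l2 (x - b) ≤ a + t
  have hxb : x - b = xc - ext h := by
    rw [hbext, hxdec]
    funext i
    simp only [Pi.sub_apply, Pi.add_apply]
    have : ext xT' i - ext y i = -(ext h i) := by
      by_cases hiT : i ∈ T <;> simp [hext, hh, hiT]
    linarith [this]
  have hfin : l2 (x - b) ^ 2 = a ^ 2 + t ^ 2 := by
    rw [hxb, l2_sq, ha, ht, ← l2ext h, l2_sq, l2_sq, ← Finset.sum_add_distrib]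
    refine Finset.sum_congr rfl fun i _ => ?_
    have := hdisj i
    simp only [Pi.sub_apply]
    nlinarith [hdisj i]
  have hle : l2 (x - b) ≤ a + t := sq_split_le (l2_nonneg (x - b)) ha0 ht0 hfin
  calc l2 (x - b) ≤ a + t := hle
    _ ≤ 1.112 * a + 1.06 * ε := by linarith
    _ = 1.112 * l2 (fun i => if i ∈ T then 0 else x i) + 1.06 * l2 e := by rw [ha, hε, hxc]
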